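/- Let Ω ⊂ ℝ^d be a bounded measurable set, let D : ℝ^{d×N} → ℝ^{d×N} be continuous with |D(T)| ≤ C₂ for all T, and let G₀ : Ω → ℝ^{d×N} be measurable and bounded. Suppose there exist C₁ > 0 and t_c > 0 such that for almost every x ∈ Ω, every unit matrix W ∈ ℝ^{d×N} (|W| = 1) and every t ≥ t_c one has (D(tW) − G₀(x)) · W ≥ C₁/2. Then there is a constant C, depending only on C₁, C₂, t_c, the Lebesgue measure of Ω and the sup norm of G₀, such that for every T ∈ L¹(Ω; ℝ^{d×N}): ∫_Ω [F(T(x)) − G₀(x)·T(x)] dx ≥ (C₁/2) ∫_Ω |T(x)| dx − C, where F(T) := ∫₀¹ D(tT)·T dt. -/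

import Mathlib

open MeasureTheory Filter Topology Set

noncomputable section

/-- The space of real `d × N` matrices with the Frobenius (Euclidean) inner ℝ product. -/
abbrev Mat (d N : ℕ) := EuclideanSpace ℝ (Fin d × Fin N)

/-- The potential `F(T) := ∫₀¹ D(tT)·T dt` of a mapping `D : ℝ^{d×N} → ℝ^{d×N}`. -/
noncomputable def pot (d N : ℕ) (D : Mat d N → Mat d N) (T : Mat d N) : ℝ :=
  ∫ t in (0 : ℝ)..1, (inner ℝ (D (t • T)) T : ℝ)

lemma pot_continuous (d N : ℕ) (D : Mat d N → Mat d N) (hD : Continuous D) :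
    Continuous (pot d N D) := by
  have : Continuous (Function.uncurry fun (T : Mat d N) (t : ℝ) =>
      (inner ℝ (D (t • T)) T : ℝ)) := by
    apply Continuous.inner
    · exact hD.comp ((continuous_snd.smul continuous_fst))
    · exact continuous_fst
  exact intervalIntegral.continuous_parametric_intervalIntegral_of_continuous' this 0 1

lemma pointwise_bound (d N : ℕ) (D : Mat d N → Mat d N) (hD : Continuous D)
    (C₂ : ℝ) (hbdd : ∀ T : Mat d N, ‖D T‖ ≤ C₂)
    (C₁ tc M' : ℝ) (hC₁ : 0 < C₁) (htc : 0 < tc) (hM' : 0 ≤ M')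
    (G : Mat d N) (hG : ‖G‖ ≤ M')
    (hsafe : ∀ W : Mat d N, ‖W‖ = 1 → ∀ t : ℝ, tc ≤ t →
      C₁ / 2 ≤ (inner ℝ (D (t • W) - G) W : ℝ))
    (T : Mat d N) :
    C₁ / 2 * ‖T‖ - (C₁ / 2 + C₂ + M') * tc ≤ pot d N D T - (inner ℝ G T : ℝ) := by
  set r := ‖T‖ with hr
  have hr0 : 0 ≤ r := norm_nonneg T
  have hC₂ : 0 ≤ C₂ := le_trans (norm_nonneg _) (hbdd 0)
  -- basic bound on the integrand
  have hlow : ∀ t : ℝ, -( (C₂ + M') * r) ≤ (inner ℝ (D (t • T)) T : ℝ) - inner ℝ G T := by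
    intro t
    have h1 : |(inner ℝ (D (t • T) - G) T : ℝ)| ≤ ‖D (t • T) - G‖ * ‖T‖ :=
      abs_real_inner_le_norm _ _
    have h2 : ‖D (t • T) - G‖ ≤ C₂ + M' :=
      le_trans (norm_sub_le _ _) (add_le_add (hbdd _) hG)
    have h3 : (inner ℝ (D (t • T) - G) T : ℝ) = inner ℝ (D (t • T)) T - inner ℝ G T := by
      rw [inner_sub_left]
    nlinarith [abs_nonneg (inner ℝ (D (t • T) - G) T : ℝ), neg_abs_le (inner ℝ (D (t • T) - G) T : ℝ)]
  have hcont : Continuous fun t : ℝ => (inner ℝ (D (t • T)) T : ℝ) - inner ℝ G T := by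
    apply Continuous.sub _ continuous_const
    exact Continuous.inner (hD.comp (continuous_id.smul continuous_const)) continuous_const
  have hint : ∀ a b : ℝ, IntervalIntegrable
      (fun t : ℝ => (inner ℝ (D (t • T)) T : ℝ) - inner ℝ G T) volume a b :=
    fun a b => hcont.intervalIntegrable a b
  have hpot : pot d N D T - (inner ℝ G T : ℝ)
      = ∫ t in (0:ℝ)..1, ((inner ℝ (D (t • T)) T : ℝ) - inner ℝ G T) := by
    rw [intervalIntegral.integral_sub
      ((Continuous.inner (hD.comp (continuous_id.smul continuous_const))
        continuous_const).intervalIntegrable 0 1) (intervalIntegrable_const)]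
    simp [pot]
  rcases le_or_gt r tc with hrtc | hrtc
  · -- small case: use trivial lower bound over the whole interval
    have h1 : (1 - 0 : ℝ) * (-((C₂ + M') * r)) ≤
        ∫ t in (0:ℝ)..1, ((inner ℝ (D (t • T)) T : ℝ) - inner ℝ G T) := by
      have := intervalIntegral.integral_mono_on (by norm_num : (0:ℝ) ≤ 1)
        (intervalIntegrable_const (c := -((C₂ + M') * r))) (hint 0 1)
        (fun t _ => hlow t)
      simpa using this
    rw [hpot]
    nlinarith
  · -- large case: split at s = tc / r
    have hrpos : 0 < r := lt_trans htc hrtc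
    set s : ℝ := tc / r with hs
    have hs0 : 0 < s := div_pos htc hrpos
    have hs1 : s < 1 := (div_lt_one hrpos).2 hrtc
    have hsr : s * r = tc := div_mul_cancel₀ tc (ne_of_gt hrpos)
    set W : Mat d N := r⁻¹ • T with hW
    have hWnorm : ‖W‖ = 1 := by
      rw [hW, norm_smul, norm_inv, Real.norm_eq_abs, abs_of_pos hrpos]
      field_simp
      exact hr.symm
    have hTW : T = r • W := by
      rw [hW, smul_smul, mul_inv_cancel₀ (ne_of_gt hrpos), one_smul]
    have hsplit : (∫ t in (0:ℝ)..1, ((inner ℝ (D (t • T)) T : ℝ) - inner ℝ G T))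
        = (∫ t in (0:ℝ)..s, ((inner ℝ (D (t • T)) T : ℝ) - inner ℝ G T))
          + ∫ t in s..1, ((inner ℝ (D (t • T)) T : ℝ) - inner ℝ G T) :=
      (intervalIntegral.integral_add_adjacent_intervals (hint 0 s) (hint s 1)).symm
    have h1 : -((C₂ + M') * (s * r)) ≤
        ∫ t in (0:ℝ)..s, ((inner ℝ (D (t • T)) T : ℝ) - inner ℝ G T) := by
      have := intervalIntegral.integral_mono_on (le_of_lt hs0)
        (intervalIntegrable_const (c := -((C₂ + M') * r))) (hint 0 s)
        (fun t _ => hlow t)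
      simpa using this
    have h2 : r * ((1 - s) * C₁ / 2) ≤
        ∫ t in s..1, ((inner ℝ (D (t • T)) T : ℝ) - inner ℝ G T) := by
      have hmono := intervalIntegral.integral_mono_on (le_of_lt hs1)
        (intervalIntegrable_const (c := r * (C₁ / 2))) (hint s 1) ?_
      · simpa using hmono
      · intro t ht
        have htr : tc ≤ t * r := by
          calc tc = s * r := hsr.symm
          _ ≤ t * r := by nlinarith [ht.1]
        have hsafe' := hsafe W hWnorm (t * r) htr
        have key : (inner ℝ (D (t • T)) T : ℝ) - inner ℝ G T
            = r * (inner ℝ (D ((t * r) • W) - G) W : ℝ) := by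
          have e1 : t • T = (t * r) • W := by rw [hTW, smul_smul]
          rw [e1, inner_sub_left]
          conv_lhs => rw [hTW]
          simp only [real_inner_smul_right]
          ring
        rw [key]
        have := mul_le_mul_of_nonneg_left hsafe' hr0
        linarith
    rw [hpot, hsplit]
    have hCs : 0 ≤ C₁ / 2 + C₂ + M' := by positivity
    nlinarith [h1, h2]

/-- Coercivity of the dual functional: under the safety strain condition, the functional
`T ↦ ∫_Ω (F(T) − G₀·T)` is bounded below by `(C₁/2)‖T‖_{L¹} − C` on `L¹(Ω; ℝ^{d×N})`. -/
theorem dual_functional_coercive (d N : ℕ) (hd : 1 ≤ d) (hN : 1 ≤ N)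
    (Ω : Set (EuclideanSpace ℝ (Fin d)))
    (hΩmeas : MeasurableSet Ω) (hΩbdd : Bornology.IsBounded Ω)
    (D : Mat d N → Mat d N) (hD : Continuous D)
    (C₂ : ℝ) (hC₂ : 0 < C₂) (hbdd : ∀ T : Mat d N, ‖D T‖ ≤ C₂)
    (G₀ : EuclideanSpace ℝ (Fin d) → Mat d N)
    (hG₀meas : Measurable G₀) (M : ℝ) (hG₀bdd : ∀ x ∈ Ω, ‖G₀ x‖ ≤ M)
    (C₁ tc : ℝ) (hC₁ : 0 < C₁) (htc : 0 < tc)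
    (hsafe : ∀ᵐ x ∂(volume.restrict Ω), ∀ W : Mat d N, ‖W‖ = 1 → ∀ t : ℝ, tc ≤ t →
      C₁ / 2 ≤ (inner ℝ (D (t • W) - G₀ x) W : ℝ)) :
    ∃ C : ℝ, ∀ T : EuclideanSpace ℝ (Fin d) → Mat d N,
      IntegrableOn T Ω volume →
        C₁ / 2 * (∫ x in Ω, ‖T x‖) - C
          ≤ ∫ x in Ω, (pot d N D (T x) - (inner ℝ (G₀ x) (T x) : ℝ)) := by
  set M' : ℝ := max M 0 with hM'
  have hM'0 : 0 ≤ M' := le_max_right _ _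
  set K : ℝ := (C₁ / 2 + C₂ + M') * tc with hK
  refine ⟨K * (volume Ω).toReal, fun T hT => ?_⟩
  have hμfin : volume Ω < ⊤ := hΩbdd.measure_lt_top
  have hmem := ae_restrict_mem (μ := volume) hΩmeas
  -- pointwise a.e. bound
  have hpt : ∀ᵐ x ∂(volume.restrict Ω),
      C₁ / 2 * ‖T x‖ - K ≤ pot d N D (T x) - (inner ℝ (G₀ x) (T x) : ℝ) := by
    filter_upwards [hsafe, hmem] with x hx hxΩ
    exact pointwise_bound d N D hD C₂ hbdd C₁ tc M' hC₁ htc hM'0 (G₀ x)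
      (le_trans (hG₀bdd x hxΩ) (le_max_left _ _)) hx (T x)
  -- integrability of the right-hand side
  have hTsm := hT.aestronglyMeasurable
  have hsm : AEStronglyMeasurable
      (fun x => pot d N D (T x) - (inner ℝ (G₀ x) (T x) : ℝ)) (volume.restrict Ω) := by
    apply AEStronglyMeasurable.sub
    · exact (pot_continuous d N D hD).comp_aestronglyMeasurable hTsm
    · exact AEStronglyMeasurable.inner hG₀meas.aestronglyMeasurable hTsm
  have hC₂0 : (0:ℝ) ≤ C₂ := le_of_lt hC₂
  have hRint : Integrable (fun x => pot d N D (T x) - (inner ℝ (G₀ x) (T x) : ℝ))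
      (volume.restrict Ω) := by
    apply Integrable.mono (g := fun x => (C₂ + M') * ‖T x‖) (hT.norm.const_mul (C₂ + M')) hsm
    filter_upwards [hmem] with x hxΩ
    have h1 : |pot d N D (T x)| ≤ C₂ * ‖T x‖ := by
      have := intervalIntegral.norm_integral_le_of_norm_le_const
        (C := C₂ * ‖T x‖) (f := fun t => (inner ℝ (D (t • T x)) (T x) : ℝ)) (a := 0) (b := 1) ?_
      · simpa [pot] using this
      · intro t _
        calc ‖(inner ℝ (D (t • T x)) (T x) : ℝ)‖ = |(inner ℝ (D (t • T x)) (T x) : ℝ)| := rfl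
        _ ≤ ‖D (t • T x)‖ * ‖T x‖ := abs_real_inner_le_norm _ _
        _ ≤ C₂ * ‖T x‖ := by nlinarith [hbdd (t • T x), norm_nonneg (T x), norm_nonneg (D (t • T x))]
    have h2 : |(inner ℝ (G₀ x) (T x) : ℝ)| ≤ M' * ‖T x‖ := by
      calc |(inner ℝ (G₀ x) (T x) : ℝ)| ≤ ‖G₀ x‖ * ‖T x‖ := abs_real_inner_le_norm _ _
      _ ≤ M' * ‖T x‖ := by
        have := le_trans (hG₀bdd x hxΩ) (le_max_left M 0)
        nlinarith [norm_nonneg (T x)]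
    have : ‖pot d N D (T x) - (inner ℝ (G₀ x) (T x) : ℝ)‖ ≤ (C₂ + M') * ‖T x‖ := by
      rw [Real.norm_eq_abs]
      calc |pot d N D (T x) - (inner ℝ (G₀ x) (T x) : ℝ)|
          ≤ |pot d N D (T x)| + |(inner ℝ (G₀ x) (T x) : ℝ)| := abs_sub _ _
        _ ≤ (C₂ + M') * ‖T x‖ := by linarith
    calc ‖pot d N D (T x) - (inner ℝ (G₀ x) (T x) : ℝ)‖ ≤ (C₂ + M') * ‖T x‖ := this
      _ ≤ ‖(C₂ + M') * ‖T x‖‖ := le_abs_self _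
  have hLint : Integrable (fun x => C₁ / 2 * ‖T x‖ - K) (volume.restrict Ω) :=
    (hT.norm.const_mul (C₁ / 2)).sub (integrableOn_const hμfin.ne)
  have hmono := integral_mono_ae hLint hRint hpt
  have heq : ∫ x in Ω, (C₁ / 2 * ‖T x‖ - K)
      = C₁ / 2 * (∫ x in Ω, ‖T x‖) - K * (volume Ω).toReal := by
    rw [integral_sub (hT.norm.const_mul (C₁ / 2)) (integrableOn_const hμfin.ne),
      integral_const_mul, setIntegral_const, smul_eq_mul, measureReal_def]
    ring
  linarith [hmono, heq.symm.le, heq.le]
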